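/- arXiv:1501.01230 — 2 statements merged into one kernel-verified Lean document; each statement's English description precedes it below -/
import Mathlib

section
/- Let n ≥ 2 and 2 ≤ k ≤ n. There is a constant c > 0 depending only on n such that for every h > 1 and every n-dimensional interval I = ×_{j=1}ⁿ (a_j, a_j + δ_j) whose last n−k+1 edge lengths are equal (δ_{k−1} = δ_k = ⋯ = δ_n), one has |{x ∈ ℝⁿ : M_{𝐈_n^k}(hχ_I)(x) > 1}| ≥ c·h·(ln h)^{k−1}·|I|, where M_{𝐈_n^k} is the (untruncated) maximal operator of the basis 𝐈_n^k. -/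
open MeasureTheory Set Filter Topology Metric ENNReal

noncomputable section

/-- Euclidean space `ℝⁿ`. -/
abbrev EucSp (n : ℕ) := EuclideanSpace ℝ (Fin n)

/-- The open unit cube `𝔾ⁿ = (0,1)ⁿ`. -/
def Gcube (n : ℕ) : Set (EucSp n) := {x | ∀ j, x j ∈ Set.Ioo (0:ℝ) 1}

/-- A "basis mapping": to every point it assigns a family of sets. -/
abbrev BasisMap (n : ℕ) := EucSp n → Set (Set (EucSp n))

/-- `B` is a differentiation basis: every `R ∈ B(x)` is a bounded measurable set of positive
measure containing `x`, and `B(x)` contains sets of arbitrarily small diameter. -/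
def IsDiffBasis {n : ℕ} (B : BasisMap n) : Prop :=
  ∀ x : EucSp n,
    (∀ R ∈ B x, x ∈ R ∧ Bornology.IsBounded R ∧ MeasurableSet R ∧ 0 < volume R) ∧
    ∀ ε : ℝ, 0 < ε → ∃ R ∈ B x, Metric.diam R < ε

/-- Translation invariance: `B(x) = {x + I : I ∈ B(0)}`. -/
def IsTIBasis {n : ℕ} (B : BasisMap n) : Prop :=
  ∀ x : EucSp n, B x = (fun I => (fun y => x + y) '' I) '' B 0

/-- The truncated maximal operator `M_B^{(r)} f (x)`. -/
def maxTrunc {n : ℕ} (B : BasisMap n) (r : ℝ) (f : EucSp n → ℝ) (x : EucSp n) : ℝ≥0∞ :=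
  ⨆ (R : Set (EucSp n)) (_ : R ∈ B x ∧ Metric.diam R < r),
    (∫⁻ y in R, ENNReal.ofReal |f y|) / volume R

/-- The (untruncated) maximal operator `M_B f (x)`. -/
def maxOp {n : ℕ} (B : BasisMap n) (f : EucSp n → ℝ) (x : EucSp n) : ℝ≥0∞ :=
  ⨆ (R : Set (EucSp n)) (_ : R ∈ B x), (∫⁻ y in R, ENNReal.ofReal |f y|) / volume R

/-- The upper derivative `D̄_B(∫f, x)` equals `+∞`. -/
def upperDerivInfinite {n : ℕ} (B : BasisMap n) (f : EucSp n → ℝ) (x : EucSp n) : Prop :=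
  ∀ M : ℝ, ∀ δ : ℝ, 0 < δ →
    ∃ R ∈ B x, Metric.diam R < δ ∧ M * (volume R).toReal < ∫ y in R, f y

/-- The family `W_m` of dyadic intervals of order `m`. -/
def dyadicW {n : ℕ} (m : Fin n → ℕ) : Set (Set (EucSp n)) :=
  {S | ∃ k : Fin n → ℤ, S =
    {x : EucSp n | ∀ j, (k j : ℝ) / 2 ^ (m j) < x j ∧ x j < ((k j : ℝ) + 1) / 2 ^ (m j)}}

/-- The family `H_m` of all unions of dyadic intervals of order `m`. -/
def dyadicH {n : ℕ} (m : Fin n → ℕ) : Set (Set (EucSp n)) :=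
  {S | ∃ T ⊆ dyadicW m, S = ⋃₀ T}

/-- `W_m* = {Q ∈ W_m : Q ⊆ 𝔾ⁿ}`. -/
def dyadicWStar {n : ℕ} (m : Fin n → ℕ) : Set (Set (EucSp n)) :=
  {S | S ∈ dyadicW m ∧ S ⊆ Gcube n}

/-- `H_m* = {E ∈ H_m : E ⊆ 𝔾ⁿ}`. -/
def dyadicHStar {n : ℕ} (m : Fin n → ℕ) : Set (Set (EucSp n)) :=
  {S | S ∈ dyadicH m ∧ S ⊆ Gcube n}

/-- An (open) `n`-dimensional interval. -/
def IsOpenInterval {n : ℕ} (Q : Set (EucSp n)) : Prop :=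
  ∃ a b : Fin n → ℝ, Q = {x : EucSp n | ∀ j, a j < x j ∧ x j < b j}

/-- The function `h·χ_E`. -/
def indFun {n : ℕ} (E : Set (EucSp n)) (h : ℝ) : EucSp n → ℝ :=
  E.indicator fun _ => h

/-- The `M_Φ`-property with the given constants `c` and `c(·)`. -/
def MPhiPropertyWith {n : ℕ} (Λ : Set (BasisMap n)) (Φ : ℝ → ℝ) (c : ℝ) (ch : ℝ → ℝ) : Prop :=
  ∀ h : ℝ, 1 < h → ∀ ε : ℝ, 0 < ε →
    ∃ (E : Set (EucSp n)) (P : BasisMap n → Set (EucSp n)) (Q : Set (EucSp n)),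
      MeasurableSet E ∧ 0 < volume E ∧ IsOpenInterval Q ∧
      (∀ B ∈ Λ, P B ⊆ {x | 1 < maxTrunc B ε (indFun E h) x}) ∧
      (∃ m : Fin n → ℕ, ∀ B ∈ Λ, P B ∈ dyadicH m) ∧
      (∀ B ∈ Λ, ENNReal.ofReal (c * Φ h) * volume E ≤ volume (P B)) ∧
      E ⊆ Q ∧ (∀ B ∈ Λ, P B ⊆ Q) ∧ Metric.diam Q < ε ∧
      ENNReal.ofReal (ch h) * volume Q ≤ volume E

/-- The `M_Φ`-property. -/
def MPhiProperty {n : ℕ} (Λ : Set (BasisMap n)) (Φ : ℝ → ℝ) : Prop :=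
  ∃ c : ℝ, 0 < c ∧ ∃ ch : ℝ → ℝ, (∀ h : ℝ, 1 < h → ch h ∈ Set.Ioo (0:ℝ) 1) ∧
    MPhiPropertyWith Λ Φ c ch

/-- `f ∈ L(𝔾ⁿ)`: integrable and supported in the unit cube. -/
def MemL {n : ℕ} (f : EucSp n → ℝ) : Prop :=
  Integrable f ∧ {x | f x ≠ 0} ⊆ Gcube n

/-- `Φ` is non-regular: `limsup_{t→∞} Φ(t)/t = ∞`. -/
def NonRegular (Φ : ℝ → ℝ) : Prop :=
  ∀ M T : ℝ, ∃ t : ℝ, T < t ∧ 0 < t ∧ M * t < Φ t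

/-- `Φ` satisfies the `Δ₂`-condition at infinity. -/
def Delta2 (Φ : ℝ → ℝ) : Prop :=
  ∃ c τ : ℝ, 0 < c ∧ 0 < τ ∧ ∀ t : ℝ, τ < t → Φ (2 * t) ≤ c * Φ t

/-- The `γ`-rotated basis `B(γ)`. -/
def rotateBasis {n : ℕ} (B : BasisMap n) (γ : EucSp n ≃ₗᵢ[ℝ] EucSp n) : BasisMap n :=
  fun x => (fun R => (fun y => x + γ (y - x)) '' R) '' B x

/-- `γ` is a rotation (orientation-preserving linear isometry). -/
def IsRotation {n : ℕ} (γ : EucSp n ≃ₗᵢ[ℝ] EucSp n) : Prop :=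
  LinearMap.det (γ.toLinearEquiv : EucSp n →ₗ[ℝ] EucSp n) = 1

/-- The function `Φ_B(h) = lim_{t→∞} limsup_{r→0} |{M_B^{(tr)}(hχ_{V_r}) > 1}| / |V_r|`. -/
def PhiB {n : ℕ} (B : BasisMap n) (h : ℝ) : ℝ≥0∞ :=
  Filter.limsup (fun t : ℝ =>
    Filter.limsup (fun r : ℝ =>
      volume {x : EucSp n | 1 < maxTrunc B (t * r) (indFun (Metric.ball (0 : EucSp n) r) h) x}
        / volume (Metric.ball (0 : EucSp n) r)) (𝓝[>] (0:ℝ))) Filter.atTop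

/-- The basis `𝐈ₙᵏ` of intervals with at most `k` distinct edge lengths. -/
def baseInk (n k : ℕ) : BasisMap n := fun x =>
  {R | ∃ a b : Fin n → ℝ,
    R = {y : EucSp n | ∀ j, a j < y j ∧ y j < b j} ∧ (∀ j, a j < x j ∧ x j < b j) ∧
    (Finset.image (fun j => b j - a j) Finset.univ).card ≤ k}

/-- `f` belongs to the Orlicz class `ψ(L)(𝔾ⁿ)`. -/
def MemPsiL {n : ℕ} (ψ : ℝ → ℝ) (f : EucSp n → ℝ) : Prop :=
  Measurable f ∧ {x | f x ≠ 0} ⊆ Gcube n ∧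
    ∫⁻ x in {x | f x ≠ 0}, ENNReal.ofReal (ψ |f x|) < ⊤

/-- The Luxemburg distance on `ψ(L)(𝔾ⁿ)`. -/
def luxDist {n : ℕ} (ψ : ℝ → ℝ) (f g : EucSp n → ℝ) : ℝ :=
  sInf {lam : ℝ | 0 < lam ∧
    ∫⁻ x in {x | f x ≠ g x}, ENNReal.ofReal (ψ (|f x - g x| / lam)) ≤ 1}

/-- `f ∈ S_{Δ(B)}`: an integrable function supported in `𝔾ⁿ` whose integral has upper
derivative `+∞` a.e. on `𝔾ⁿ` with respect to every rotation of `B`. -/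
def MemSDeltaB {n : ℕ} (B : BasisMap n) (f : EucSp n → ℝ) : Prop :=
  Integrable f ∧ {x | f x ≠ 0} ⊆ Gcube n ∧
    ∀ γ : EucSp n ≃ₗᵢ[ℝ] EucSp n, IsRotation γ →
      ∀ᵐ x ∂(volume : Measure (EucSp n)), x ∈ Gcube n →
        upperDerivInfinite (rotateBasis B γ) f x

/-- `T` is of the first Baire category in the space `ψ(L)(𝔾ⁿ)` with the Luxemburg metric:
`T` is a countable union of sets `F k`, each of which is nowhere dense (every ball of the
space contains a ball disjoint from `F k`). -/
def FirstCategoryInPsiL {n : ℕ} (ψ : ℝ → ℝ) (T : Set (EucSp n → ℝ)) : Prop :=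
  ∃ F : ℕ → Set (EucSp n → ℝ), T ⊆ (⋃ k, F k) ∧
    ∀ k : ℕ, ∀ f : EucSp n → ℝ, MemPsiL ψ f → ∀ ε : ℝ, 0 < ε →
      ∃ g : EucSp n → ℝ, MemPsiL ψ g ∧ luxDist ψ f g < ε ∧
        ∃ δ : ℝ, 0 < δ ∧ ∀ u : EucSp n → ℝ, MemPsiL ψ u → luxDist ψ g u < δ → u ∉ F k


def box {n : ℕ} (a b : Fin n → ℝ) : Set (EucSp n) := {y | ∀ j, a j < y j ∧ y j < b j}

lemma box_meas {n : ℕ} (a b : Fin n → ℝ) : MeasurableSet (box a b) := by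
  have : box a b = ⋂ j, {y : EucSp n | a j < y j ∧ y j < b j} := by
    ext y; simp [box, Set.mem_iInter]
  rw [this]
  refine MeasurableSet.iInter fun j => ?_
  have hm : Measurable fun y : EucSp n => y j :=
    (continuous_apply j).measurable.comp (MeasurableEquiv.toLp 2 (Fin n → ℝ)).symm.measurable
  exact (measurableSet_lt measurable_const hm).inter (measurableSet_lt hm measurable_const)

lemma box_vol {n : ℕ} (a b : Fin n → ℝ) :
    volume (box a b) = ∏ j, ENNReal.ofReal (b j - a j) := by
  have h := (EuclideanSpace.volume_preserving_symm_measurableEquiv_toLp (Fin n)).symm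
  have h2 : volume (box a b)
      = volume ((MeasurableEquiv.toLp 2 (Fin n → ℝ)).symm.symm ⁻¹' (box a b)) := by
    rw [h.measure_preimage (box_meas a b).nullMeasurableSet]
  rw [h2]
  have h3 : ((MeasurableEquiv.toLp 2 (Fin n → ℝ)).symm.symm ⁻¹' (box a b))
      = Set.pi Set.univ (fun j => Set.Ioo (a j) (b j)) := by
    ext y; simp [box, MeasurableEquiv.coe_toLp, Set.mem_pi]
  rw [h3, volume_pi_pi]
  simp [Real.volume_Ioo]

lemma mem_baseInk {n k : ℕ} {a b : Fin n → ℝ} {x : EucSp n}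
    (h1 : ∀ j, a j < x j ∧ x j < b j)
    (h2 : (Finset.image (fun j => b j - a j) Finset.univ).card ≤ k) :
    box a b ∈ baseInk n k x := ⟨a, b, rfl, h1, h2⟩

lemma maxOp_lower {n k : ℕ} {f : EucSp n → ℝ} {x : EucSp n} {R : Set (EucSp n)}
    (hR : R ∈ baseInk n k x) :
    (∫⁻ y in R, ENNReal.ofReal |f y|) / volume R ≤ maxOp (baseInk n k) f x :=
  le_iSup₂ (f := fun (R : Set (EucSp n)) (_ : R ∈ baseInk n k x) =>
    (∫⁻ y in R, ENNReal.ofReal |f y|) / volume R) R hR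

lemma lint_indFun {n : ℕ} {I R : Set (EucSp n)} (hI : MeasurableSet I) (hIR : I ⊆ R)
    {h : ℝ} (hh : 0 ≤ h) :
    (∫⁻ y in R, ENNReal.ofReal |indFun I h y|) = ENNReal.ofReal h * volume I := by
  have hp : ∀ y, ENNReal.ofReal |indFun I h y| = I.indicator (fun _ => ENNReal.ofReal h) y := by
    intro y
    by_cases hy : y ∈ I <;> simp [indFun, hy, abs_of_nonneg hh]
  simp_rw [hp]
  rw [lintegral_indicator hI, Measure.restrict_restrict hI, setLIntegral_const,
    Set.inter_eq_self_of_subset_left hIR, mul_comm]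

/-- If an admissible interval `R` containing `x` contains `I` and is smaller than `h·|I|`,
then the maximal function of `h·χ_I` at `x` exceeds 1. -/
lemma level_of_mem {n k : ℕ} {x : EucSp n} {I : Set (EucSp n)} (hI : MeasurableSet I)
    {h : ℝ} (hh : 0 ≤ h) {a' b' : Fin n → ℝ}
    (hR : box a' b' ∈ baseInk n k x) (hsub : I ⊆ box a' b')
    (hvol0 : volume (box a' b') ≠ 0) (hvolt : volume (box a' b') ≠ ⊤)
    (hlt : volume (box a' b') < ENNReal.ofReal h * volume I) :
    1 < maxOp (baseInk n k) (indFun I h) x := by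
  refine lt_of_lt_of_le ?_ (maxOp_lower hR)
  rw [lint_indFun hI hsub hh, ENNReal.lt_div_iff_mul_lt (Or.inl hvol0) (Or.inl hvolt), one_mul]
  exact hlt

/-- Edge-length count: if `f` is constant on indices `k-2 ≤ j ≤ n-2`,
the image of `f` has at most `k` elements. -/
lemma card_aux {n k : ℕ} (hn : 2 ≤ n) (hk1 : 2 ≤ k) (hk2 : k ≤ n) (f : Fin n → ℝ)
    (hf : ∀ i j : Fin n, k - 2 ≤ (i:ℕ) → (i:ℕ) ≤ n - 2 → k - 2 ≤ (j:ℕ) → (j:ℕ) ≤ n - 2 →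
      f i = f j) :
    (Finset.image f Finset.univ).card ≤ k := by
  have hj0 : k - 2 < n := by omega
  have hjl : n - 1 < n := by omega
  have hsub : Finset.image f Finset.univ ⊆
      (Finset.image f (Finset.univ.filter (fun j : Fin n => (j:ℕ) < k - 2)))
        ∪ {f ⟨k-2, hj0⟩, f ⟨n-1, hjl⟩} := by
    intro y hy
    simp only [Finset.mem_image, Finset.mem_univ, true_and] at hy
    obtain ⟨j, rfl⟩ := hy
    rcases lt_or_ge ((j:ℕ)) (k-2) with hj | hj
    · exact Finset.mem_union_left _ (Finset.mem_image.2 ⟨j, by simp [hj], rfl⟩)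
    · rcases eq_or_lt_of_le (show (j:ℕ) ≤ n - 1 by omega) with hj2 | hj2
      · have : j = ⟨n-1, hjl⟩ := Fin.ext (by simpa using hj2)
        subst this
        simp
      · have : f j = f ⟨k-2, hj0⟩ := hf j ⟨k-2, hj0⟩ hj (by omega) (by simp) (by simp; omega)
        rw [this]; simp
  have h2 : ({f ⟨k-2, hj0⟩, f ⟨n-1, hjl⟩} : Finset ℝ).card ≤ 2 := by
    have := Finset.card_insert_le (f ⟨k-2, hj0⟩) ({f ⟨n-1, hjl⟩} : Finset ℝ)
    simpa using this
  have h1 : (Finset.image f (Finset.univ.filter (fun j : Fin n => (j:ℕ) < k - 2))).card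
      ≤ k - 2 := by
    calc (Finset.image f (Finset.univ.filter (fun j : Fin n => (j:ℕ) < k - 2))).card
        ≤ (Finset.univ.filter (fun j : Fin n => (j:ℕ) < k - 2)).card := Finset.card_image_le
      _ ≤ (Finset.range (k-2)).card := by
          refine Finset.card_le_card_of_injOn (fun j => (j:ℕ)) ?_ ?_
          · intro j hj; simp at hj ⊢; omega
          · intro i _ j _ hij; exact Fin.ext hij
      _ = k - 2 := Finset.card_range _
  calc (Finset.image f Finset.univ).card
      ≤ _ := Finset.card_le_card hsub
    _ ≤ _ + _ := Finset.card_union_le _ _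
    _ ≤ (k-2) + 2 := by gcongr
    _ ≤ k := by omega

lemma box_vol' {n : ℕ} (a c : Fin n → ℝ) (hc : ∀ j, 0 ≤ c j) :
    volume (box a (fun j => a j + c j)) = ENNReal.ofReal (∏ j, c j) := by
  rw [box_vol, ENNReal.ofReal_prod_of_nonneg (fun j _ => hc j)]
  simp

lemma self_subset_level {n k : ℕ} (hn : 2 ≤ n) (hk1 : 2 ≤ k) (hk2 : k ≤ n)
    (a δ : Fin n → ℝ) (hδ : ∀ j, 0 < δ j)
    (hδc : ∀ i j : Fin n, k ≤ (i:ℕ) + 2 → k ≤ (j:ℕ) + 2 → δ i = δ j)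
    {h : ℝ} (hh : 1 < h) :
    box a (fun j => a j + δ j) ⊆
      {x | 1 < maxOp (baseInk n k) (indFun (box a (fun j => a j + δ j)) h) x} := by
  intro x hx
  have hvol : volume (box a (fun j => a j + δ j)) = ENNReal.ofReal (∏ j, δ j) :=
    box_vol' a δ (fun j => (hδ j).le)
  have hprod : 0 < ∏ j, δ j := Finset.prod_pos (fun j _ => hδ j)
  have hcard : (Finset.image (fun j => (a j + δ j) - a j) Finset.univ).card ≤ k := by
    refine card_aux hn hk1 hk2 _ (fun i j hi1 hi2 hj1 hj2 => ?_)
    have : δ i = δ j := hδc i j (by omega) (by omega)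
    simp [this]
  have hmem : box a (fun j => a j + δ j) ∈ baseInk n k x :=
    mem_baseInk (fun j => hx j) hcard
  refine level_of_mem (box_meas _ _) (by linarith) hmem subset_rfl ?_ ?_ ?_
  · rw [hvol]; simp [hprod]
  · rw [hvol]; exact ENNReal.ofReal_ne_top
  · rw [hvol]
    calc ENNReal.ofReal (∏ j, δ j) = 1 * ENNReal.ofReal (∏ j, δ j) := (one_mul _).symm
      _ < ENNReal.ofReal h * ENNReal.ofReal (∏ j, δ j) := by
          refine ENNReal.mul_lt_mul_left (by simp [hprod]) ENNReal.ofReal_ne_top ?_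
          exact ENNReal.one_lt_ofReal.2 hh

lemma boxE_subset_level {n k : ℕ} (hn : 2 ≤ n) (hk1 : 2 ≤ k) (hk2 : k ≤ n)
    (a δ : Fin n → ℝ) (hδ : ∀ j, 0 < δ j)
    (hδc : ∀ i j : Fin n, k ≤ (i:ℕ) + 2 → k ≤ (j:ℕ) + 2 → δ i = δ j)
    {h : ℝ} (hh : 1 < h) (e : Fin n → ℕ)
    (hec : ∀ i j : Fin n, k - 2 ≤ (i:ℕ) → (i:ℕ) ≤ n - 2 → k - 2 ≤ (j:ℕ) → (j:ℕ) ≤ n - 2 →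
      e i = e j)
    (hlt : (2:ℝ) ^ (∑ j, e j + n) < h) :
    box (fun j => a j + 2 ^ (e j) * δ j) (fun j => a j + 2 ^ (e j + 1) * δ j) ⊆
      {x | 1 < maxOp (baseInk n k) (indFun (box a (fun j => a j + δ j)) h) x} := by
  intro x hx
  have hpow1 : ∀ j : Fin n, (1:ℝ) ≤ 2 ^ (e j + 1) := fun j => one_le_pow₀ (by norm_num)
  have hprod : 0 < ∏ j, δ j := Finset.prod_pos (fun j _ => hδ j)
  have hIsub : box a (fun j => a j + δ j) ⊆ box a (fun j => a j + 2 ^ (e j + 1) * δ j) := by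
    intro y hy
    intro j
    have h1 : a j < y j := (hy j).1
    have h2 : y j < a j + δ j := (hy j).2
    refine ⟨h1, ?_⟩
    show y j < a j + 2 ^ (e j + 1) * δ j
    nlinarith [hδ j, hpow1 j]
  have hxmem : ∀ j, a j < x j ∧ x j < a j + 2 ^ (e j + 1) * δ j := by
    intro j
    have h1 : a j + 2 ^ (e j) * δ j < x j := (hx j).1
    have h2 : x j < a j + 2 ^ (e j + 1) * δ j := (hx j).2
    have h3 : (0:ℝ) < 2 ^ (e j) * δ j := mul_pos (pow_pos two_pos _) (hδ j)
    exact ⟨by linarith, h2⟩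
  have hcard : (Finset.image (fun j => (a j + 2 ^ (e j + 1) * δ j) - a j) Finset.univ).card
      ≤ k := by
    refine card_aux hn hk1 hk2 _ (fun i j hi1 hi2 hj1 hj2 => ?_)
    have h1 : δ i = δ j := hδc i j (by omega) (by omega)
    have h2 : e i = e j := hec i j hi1 hi2 hj1 hj2
    simp [h1, h2]
  have hmem : box a (fun j => a j + 2 ^ (e j + 1) * δ j) ∈ baseInk n k x :=
    mem_baseInk hxmem hcard
  have hcnn : ∀ j : Fin n, (0:ℝ) ≤ 2 ^ (e j + 1) * δ j :=
    fun j => (mul_pos (pow_pos two_pos _) (hδ j)).le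
  have hvolR : volume (box a (fun j => a j + 2 ^ (e j + 1) * δ j))
      = ENNReal.ofReal (∏ j, 2 ^ (e j + 1) * δ j) := box_vol' a _ hcnn
  have hvolI : volume (box a (fun j => a j + δ j)) = ENNReal.ofReal (∏ j, δ j) :=
    box_vol' a δ (fun j => (hδ j).le)
  have hprodR : (∏ j, (2:ℝ) ^ (e j + 1) * δ j) = 2 ^ (∑ j, e j + n) * ∏ j, δ j := by
    rw [Finset.prod_mul_distrib, Finset.prod_pow_eq_pow_sum]
    congr 2
    rw [Finset.sum_add_distrib]
    simp [Finset.card_univ]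
  refine level_of_mem (box_meas _ _) (by linarith) hmem hIsub ?_ ?_ ?_
  · rw [hvolR]
    simp only [ne_eq, ENNReal.ofReal_eq_zero, not_le]
    exact Finset.prod_pos (fun j _ => mul_pos (pow_pos two_pos _) (hδ j))
  · rw [hvolR]; exact ENNReal.ofReal_ne_top
  · rw [hvolR, hvolI, ← ENNReal.ofReal_mul (by linarith)]
    rw [ENNReal.ofReal_lt_ofReal_iff (mul_pos (by linarith) hprod)]
    rw [hprodR]
    nlinarith [hprod]

lemma box_disj_of_lt {n : ℕ} (a δ : Fin n → ℝ) (hδ : ∀ j, 0 < δ j) {e e' : Fin n → ℕ}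
    {j : Fin n} (hj : e j + 1 ≤ e' j) :
    Disjoint (box (fun j => a j + 2 ^ (e j) * δ j) (fun j => a j + 2 ^ (e j + 1) * δ j))
      (box (fun j => a j + 2 ^ (e' j) * δ j) (fun j => a j + 2 ^ (e' j + 1) * δ j)) := by
  rw [Set.disjoint_left]
  intro x hx hx'
  have h1 : x j < a j + 2 ^ (e j + 1) * δ j := (hx j).2
  have h2 : a j + 2 ^ (e' j) * δ j < x j := (hx' j).1
  have h3 : (2:ℝ) ^ (e j + 1) ≤ 2 ^ (e' j) := by
    apply pow_le_pow_right₀ one_le_two hj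
  nlinarith [hδ j]

lemma box_disj {n : ℕ} (a δ : Fin n → ℝ) (hδ : ∀ j, 0 < δ j) {e e' : Fin n → ℕ}
    (hne : e ≠ e') :
    Disjoint (box (fun j => a j + 2 ^ (e j) * δ j) (fun j => a j + 2 ^ (e j + 1) * δ j))
      (box (fun j => a j + 2 ^ (e' j) * δ j) (fun j => a j + 2 ^ (e' j + 1) * δ j)) := by
  obtain ⟨j, hj⟩ := Function.ne_iff.1 hne
  rcases lt_or_gt_of_ne hj with hlt | hgt
  · exact box_disj_of_lt a δ hδ (j := j) (by omega)
  · exact (box_disj_of_lt a δ hδ (j := j) (by omega)).symm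

lemma union_measure_lower {n k : ℕ} (hn : 2 ≤ n) (hk1 : 2 ≤ k) (hk2 : k ≤ n)
    (a δ : Fin n → ℝ) (hδ : ∀ j, 0 < δ j)
    (hδc : ∀ i j : Fin n, k ≤ (i:ℕ) + 2 → k ≤ (j:ℕ) + 2 → δ i = δ j)
    {h : ℝ} (hh : 1 < h) (M : ℕ)
    (hMle : (2:ℝ) ^ ((n-1)*M + n) < h) :
    ((((M+1)^(k-1) : ℕ)) : ℝ≥0∞) * ENNReal.ofReal (2^((n-1)*M) * ∏ j, δ j)
      ≤ volume {x | 1 < maxOp (baseInk n k) (indFun (box a (fun j => a j + δ j)) h) x} := by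
  set m := k - 2 with hm
  set T := (n-1)*M with hT
  have hmn : m < n := by omega
  have hm2 : m ≤ n - 2 := by omega
  set V := ((Fin m → Fin (M+1)) × Fin (M+1)) with hV
  set Sp : V → ℕ := fun v => ∑ i, (v.1 i : ℕ) with hSp
  set r0 : V → ℕ := fun v => T - Sp v - (n - m - 1) * (v.2:ℕ) with hr0
  set emb : V → Fin n → ℕ := fun v j =>
    if hj : (j:ℕ) < m then (v.1 ⟨(j:ℕ), hj⟩ : ℕ)
    else if (j:ℕ) = n-1 then r0 v else (v.2 : ℕ) with hemb
  -- upper bound needed for the truncated subtraction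
  have hub : ∀ v : V, Sp v + (n - m - 1) * (v.2:ℕ) ≤ T := by
    intro v
    have h1 : Sp v ≤ m * M := by
      calc Sp v ≤ Finset.univ.card • M :=
            Finset.sum_le_card_nsmul _ _ _ (fun i _ => by omega)
        _ = m * M := by simp [smul_eq_mul]
    have h2 : (n - m - 1) * (v.2:ℕ) ≤ (n - m - 1) * M :=
      Nat.mul_le_mul_left _ (by omega)
    have h3 : m * M + (n - m - 1) * M = T := by
      rw [hT, ← Nat.add_mul]
      congr 1
      omega
    omega
  -- the sum of the exponents is T
  have hsum : ∀ v : V, ∑ j, emb v j = T := by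
    intro v
    have hsplit := Finset.sum_filter_add_sum_filter_not Finset.univ
      (fun j : Fin n => (j:ℕ) < m) (emb v)
    have hsplit2 := Finset.sum_filter_add_sum_filter_not
      (Finset.univ.filter (fun j : Fin n => ¬ (j:ℕ) < m))
      (fun j : Fin n => (j:ℕ) = n-1) (emb v)
    -- sum over first block
    have hAeq : Finset.univ.filter (fun j : Fin n => (j:ℕ) < m)
        = Finset.image (fun i : Fin m => Fin.castLE hmn.le i) Finset.univ := by
      ext j
      simp only [Finset.mem_filter, Finset.mem_univ, true_and, Finset.mem_image]
      constructor
      · intro hj; exact ⟨⟨(j:ℕ), hj⟩, Fin.ext rfl⟩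
      · rintro ⟨i, rfl⟩; exact i.isLt
    have hsumA : ∑ j ∈ Finset.univ.filter (fun j : Fin n => (j:ℕ) < m), emb v j
        = Sp v := by
      rw [hAeq, Finset.sum_image (fun i _ i' _ hii' => Fin.castLE_injective _ hii')]
      refine Finset.sum_congr rfl (fun i _ => ?_)
      simp only [hemb, Fin.coe_castLE]
      rw [dif_pos i.isLt]
    have hcardA : (Finset.univ.filter (fun j : Fin n => (j:ℕ) < m)).card = m := by
      rw [hAeq, Finset.card_image_of_injective _ (Fin.castLE_injective _)]
      simp
    -- sum over the singleton {n-1}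
    have hLeq : (Finset.univ.filter (fun j : Fin n => ¬ (j:ℕ) < m)).filter
        (fun j : Fin n => (j:ℕ) = n-1) = {(⟨n-1, by omega⟩ : Fin n)} := by
      ext j
      simp only [Finset.mem_filter, Finset.mem_univ, true_and, Finset.mem_singleton]
      constructor
      · rintro ⟨-, h2⟩; exact Fin.ext h2
      · rintro rfl
        exact ⟨show ¬ (n-1 < m) by omega, rfl⟩
    have hsumL : ∑ j ∈ (Finset.univ.filter (fun j : Fin n => ¬ (j:ℕ) < m)).filter
        (fun j : Fin n => (j:ℕ) = n-1), emb v j = r0 v := by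
      rw [hLeq, Finset.sum_singleton]
      simp only [hemb, Fin.val_mk]
      rw [dif_neg (show ¬ (n-1 < m) by omega)]
      simp
    -- sum over the middle block
    have hsumB : ∑ j ∈ (Finset.univ.filter (fun j : Fin n => ¬ (j:ℕ) < m)).filter
        (fun j : Fin n => ¬ (j:ℕ) = n-1), emb v j
        = ((Finset.univ.filter (fun j : Fin n => ¬ (j:ℕ) < m)).filter
            (fun j : Fin n => ¬ (j:ℕ) = n-1)).card * (v.2:ℕ) := by
      rw [Finset.sum_congr rfl (fun j hj => ?_), Finset.sum_const, smul_eq_mul]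
      simp only [Finset.mem_filter, Finset.mem_univ, true_and] at hj
      simp only [hemb]
      rw [dif_neg hj.1, if_neg hj.2]
    have hcards := Finset.card_filter_add_card_filter_not
      (s := (Finset.univ : Finset (Fin n))) (p := fun j : Fin n => (j:ℕ) < m)
    have hcards2 := Finset.card_filter_add_card_filter_not
      (s := Finset.univ.filter (fun j : Fin n => ¬ (j:ℕ) < m))
      (p := fun j : Fin n => (j:ℕ) = n-1)
    have hcardL : ((Finset.univ.filter (fun j : Fin n => ¬ (j:ℕ) < m)).filter
        (fun j : Fin n => (j:ℕ) = n-1)).card = 1 := by rw [hLeq]; simp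
    have hcardu : (Finset.univ : Finset (Fin n)).card = n := by simp
    have hcardB : ((Finset.univ.filter (fun j : Fin n => ¬ (j:ℕ) < m)).filter
        (fun j : Fin n => ¬ (j:ℕ) = n-1)).card = n - m - 1 := by omega
    have h1 := hub v
    have hrv : r0 v = T - Sp v - (n - m - 1) * (v.2:ℕ) := rfl
    rw [← hsplit, hsumA, ← hsplit2, hsumL, hsumB, hcardB]
    omega
  -- injectivity
  have hinj : Function.Injective emb := by
    intro v v' hvv'
    have h2 : v.2 = v'.2 := by
      have := congrFun hvv' ⟨m, hmn⟩
      simp only [hemb, Fin.val_mk] at this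
      simp only [dif_neg (lt_irrefl m), if_neg (show ¬ (m = n-1) by omega)] at this
      exact Fin.ext this
    have h1 : v.1 = v'.1 := by
      funext i
      have := congrFun hvv' (Fin.castLE hmn.le i)
      simp only [hemb, Fin.coe_castLE] at this
      simp only [dif_pos i.isLt] at this
      exact Fin.ext this
    exact Prod.ext h1 h2
  -- each box has volume 2^T * ∏ δ
  have hvolbox : ∀ v : V,
      volume (box (fun j => a j + 2 ^ (emb v j) * δ j)
        (fun j => a j + 2 ^ (emb v j + 1) * δ j))
      = ENNReal.ofReal (2^T * ∏ j, δ j) := by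
    intro v
    have hc : ∀ j : Fin n, (0:ℝ) ≤ 2 ^ (emb v j) * δ j :=
      fun j => (mul_pos (pow_pos two_pos _) (hδ j)).le
    have : (fun j : Fin n => a j + 2 ^ (emb v j + 1) * δ j)
        = fun j => (a j + 2 ^ (emb v j) * δ j) + 2 ^ (emb v j) * δ j := by
      funext j; ring
    rw [this, box_vol' _ _ hc]
    congr 1
    rw [Finset.prod_mul_distrib, Finset.prod_pow_eq_pow_sum, hsum v]
  -- boxes are in the level set
  have hbx_sub : ∀ v : V,
      box (fun j => a j + 2 ^ (emb v j) * δ j) (fun j => a j + 2 ^ (emb v j + 1) * δ j)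
        ⊆ {x | 1 < maxOp (baseInk n k) (indFun (box a (fun j => a j + δ j)) h) x} := by
    intro v
    refine boxE_subset_level hn hk1 hk2 a δ hδ hδc hh (emb v) ?_ ?_
    · intro i j hi1 hi2 hj1 hj2
      simp only [hemb]
      rw [dif_neg (by omega), if_neg (by omega), dif_neg (by omega), if_neg (by omega)]
    · rw [hsum v]; exact hMle
  -- sum up
  have hdisj : (↑(Finset.univ : Finset V) : Set V).PairwiseDisjoint
      (fun v => box (fun j => a j + 2 ^ (emb v j) * δ j)
        (fun j => a j + 2 ^ (emb v j + 1) * δ j)) := by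
    intro v _ v' _ hvv'
    exact box_disj a δ hδ (fun he => hvv' (hinj he))
  have hmeasU := measure_biUnion_finset (μ := (volume : Measure (EucSp n))) hdisj
    (fun v _ => box_meas (fun j => a j + 2 ^ (emb v j) * δ j)
      (fun j => a j + 2 ^ (emb v j + 1) * δ j))
  calc ((((M+1)^(k-1) : ℕ)) : ℝ≥0∞) * ENNReal.ofReal (2^T * ∏ j, δ j)
      = ∑ v : V, volume (box (fun j => a j + 2 ^ (emb v j) * δ j)
          (fun j => a j + 2 ^ (emb v j + 1) * δ j)) := by
        rw [Finset.sum_congr rfl (fun v _ => hvolbox v), Finset.sum_const, nsmul_eq_mul]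
        congr 2
        rw [Finset.card_univ]
        simp only [hV]
        rw [Fintype.card_prod, Fintype.card_fun]
        simp only [Fintype.card_fin]
        rw [← pow_succ]
        congr 1
        omega
    _ = volume (⋃ v ∈ (Finset.univ : Finset V), box (fun j => a j + 2 ^ (emb v j) * δ j)
          (fun j => a j + 2 ^ (emb v j + 1) * δ j)) := hmeasU.symm
    _ ≤ volume {x | 1 < maxOp (baseInk n k) (indFun (box a (fun j => a j + δ j)) h) x} := by
        apply measure_mono
        refine Set.iUnion₂_subset (fun v _ => hbx_sub v)

set_option maxHeartbeats 2000000 in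
theorem stmt14 (n k : ℕ) (hn : 2 ≤ n) (hk1 : 2 ≤ k) (hk2 : k ≤ n) :
    ∃ c : ℝ, 0 < c ∧ ∀ (a δ : Fin n → ℝ), (∀ j, 0 < δ j) →
      (∀ i j : Fin n, k ≤ (i : ℕ) + 2 → k ≤ (j : ℕ) + 2 → δ i = δ j) →
      ∀ h : ℝ, 1 < h →
        ENNReal.ofReal (c * h * (Real.log h) ^ (k - 1)) *
            volume {y : EucSp n | ∀ j, a j < y j ∧ y j < a j + δ j} ≤
          volume {x : EucSp n |
            1 < maxOp (baseInk n k) (indFun {y : EucSp n | ∀ j, a j < y j ∧ y j < a j + δ j} h) x} := by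
  have hn4 : (1:ℝ) ≤ 4 * n := by
    have : (2:ℝ) ≤ n := by exact_mod_cast hn
    linarith
  have hA1 : (1:ℝ) ≤ 2^(n^3+n^2) := one_le_pow₀ one_le_two
  have hB1 : (1:ℝ) ≤ (4*(n:ℝ))^n := one_le_pow₀ hn4
  have hC1 : (1:ℝ) ≤ 2^(2*n) := one_le_pow₀ one_le_two
  have hcden : (0:ℝ) < 2^(n^3+n^2) * (4*(n:ℝ))^n * 2^(2*n) := by
    exact _root_.mul_pos (_root_.mul_pos (pow_pos two_pos _) (pow_pos (by linarith) _)) (pow_pos two_pos _)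
  set c : ℝ := ((2:ℝ)^(n^3+n^2) * (4*(n:ℝ))^n * 2^(2*n))⁻¹ with hc
  have hc0 : 0 < c := inv_pos.2 hcden
  refine ⟨c, hc0, ?_⟩
  intro a δ hδ hδc h hh
  show ENNReal.ofReal (c * h * (Real.log h) ^ (k - 1)) *
      volume (box a (fun j => a j + δ j)) ≤
    volume {x : EucSp n | 1 < maxOp (baseInk n k) (indFun (box a (fun j => a j + δ j)) h) x}
  have hIvol : volume (box a (fun j => a j + δ j)) = ENNReal.ofReal (∏ j, δ j) :=
    box_vol' a δ (fun j => (hδ j).le)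
  have hh0 : (0:ℝ) < h := lt_trans one_pos hh
  have hL : 0 < Real.log h := Real.log_pos hh
  obtain ⟨N, hN⟩ : ∃ N, N = Nat.log 2 ⌊h⌋₊ := ⟨_, rfl⟩
  have hfl1 : 1 ≤ ⌊h⌋₊ := Nat.le_floor (by exact_mod_cast hh.le)
  have h2N : ((2:ℝ))^N ≤ h := by
    have h1 : (2:ℕ)^N ≤ ⌊h⌋₊ := by
      rw [hN]; exact Nat.pow_log_le_self 2 (by omega)
    have h2 : ((⌊h⌋₊ : ℕ) : ℝ) ≤ h := Nat.floor_le hh0.le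
    calc ((2:ℝ))^N = (((2:ℕ)^N : ℕ) : ℝ) := by push_cast; ring
      _ ≤ ((⌊h⌋₊ : ℕ) : ℝ) := by exact_mod_cast h1
      _ ≤ h := h2
  have hN2 : h < 2^(N+1) := by
    have h1 : ⌊h⌋₊ < 2^(N+1) := by
      rw [hN]; exact Nat.lt_pow_succ_log_self (by norm_num) _
    have h2 : h < (⌊h⌋₊ : ℝ) + 1 := Nat.lt_floor_add_one h
    have h3 : ((⌊h⌋₊ : ℕ) : ℝ) + 1 ≤ 2^(N+1) := by
      have : (⌊h⌋₊ : ℕ) + 1 ≤ 2^(N+1) := h1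
      calc ((⌊h⌋₊ : ℕ) : ℝ) + 1 = (((⌊h⌋₊ : ℕ) + 1 : ℕ) : ℝ) := by push_cast; ring
        _ ≤ (((2:ℕ)^(N+1) : ℕ) : ℝ) := by exact_mod_cast this
        _ = 2^(N+1) := by push_cast; ring
    linarith
  have hlog_le : Real.log h ≤ (N:ℝ)+1 := by
    have h1 : Real.log h ≤ Real.log (2^(N+1)) := Real.log_le_log hh0 hN2.le
    rw [Real.log_pow] at h1
    have h2 : Real.log 2 ≤ 1 := by
      have := Real.log_le_sub_one_of_pos (two_pos (α := ℝ))
      linarith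
    have h3 : (0:ℝ) ≤ (N+1 : ℕ) := by positivity
    calc Real.log h ≤ (N+1 : ℕ) * Real.log 2 := h1
      _ ≤ (N+1 : ℕ) * 1 := by nlinarith
      _ = (N:ℝ)+1 := by push_cast; ring
  rcases lt_or_ge N (n^2+n) with hsmall | hbig
  · -- small h : use I itself
    have hone : c * h * (Real.log h) ^ (k-1) ≤ 1 := by
      have e1 : Real.log h ≤ h := Real.log_le_self hh0.le
      have e2 : (Real.log h)^(k-1) ≤ h^(k-1) := pow_le_pow_left₀ hL.le e1 _
      have e3 : h ≤ 2^(n^2+n) := by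
        refine (lt_of_lt_of_le hN2 ?_).le
        exact pow_le_pow_right₀ one_le_two (by omega)
      have e4 : h * h^(k-1) = h^k := by
        rw [← pow_succ']
        congr 1
        omega
      have e5 : h^k ≤ ((2:ℝ)^(n^2+n))^k := pow_le_pow_left₀ hh0.le e3 k
      have e6 : ((2:ℝ)^(n^2+n))^k ≤ ((2:ℝ)^(n^2+n))^n :=
        pow_le_pow_right₀ (one_le_pow₀ one_le_two) hk2
      have e7 : ((2:ℝ)^(n^2+n))^n = (2:ℝ)^(n^3+n^2) := by
        rw [← pow_mul]
        congr 1
        ring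
      have e8 : h * (Real.log h)^(k-1) ≤ (2:ℝ)^(n^3+n^2) := by
        calc h * (Real.log h)^(k-1) ≤ h * h^(k-1) := by nlinarith
          _ = h^k := e4
          _ ≤ _ := by rw [← e7]; exact e5.trans e6
      have e9 : c * (2:ℝ)^(n^3+n^2) ≤ 1 := by
        have h1 : c * (2 ^ (n ^ 3 + n ^ 2) * (4 * (n:ℝ)) ^ n * 2 ^ (2 * n)) = 1 :=
          inv_mul_cancel₀ (ne_of_gt hcden)
        calc c * (2:ℝ)^(n^3+n^2) = c * 2^(n^3+n^2) * 1 := by ring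
          _ ≤ c * 2^(n^3+n^2) * ((4*(n:ℝ))^n * 2^(2*n)) := by
              refine mul_le_mul_of_nonneg_left (by nlinarith) ?_
              exact mul_nonneg hc0.le (pow_nonneg two_pos.le _)
          _ = c * (2^(n^3+n^2) * (4*(n:ℝ))^n * 2^(2*n)) := by ring
          _ = 1 := h1
      calc c * h * (Real.log h)^(k-1) = c * (h * (Real.log h)^(k-1)) := by ring
        _ ≤ c * (2:ℝ)^(n^3+n^2) := by nlinarith
        _ ≤ 1 := e9
    calc ENNReal.ofReal (c * h * (Real.log h) ^ (k - 1)) * volume (box a (fun j => a j + δ j))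
        ≤ 1 * volume (box a (fun j => a j + δ j)) :=
          mul_le_mul_left (ENNReal.ofReal_le_one.2 hone) _
      _ = volume (box a (fun j => a j + δ j)) := one_mul _
      _ ≤ _ := measure_mono (self_subset_level hn hk1 hk2 a δ hδ hδc hh)
  · -- large h : use the dyadic boxes
    obtain ⟨M, r, hdiv, hmod⟩ : ∃ M r, (n-1)*M + r = N - n - 1 ∧ r < n-1 :=
      ⟨(N-n-1)/(n-1), (N-n-1)%(n-1), Nat.div_add_mod _ _, Nat.mod_lt _ (by omega)⟩
    set P := (n-1)*M with hP
    have hnn : 2*n + 2 ≤ N := by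
      have h1 : 2*n ≤ n*n := Nat.mul_le_mul_right n hn
      have h2 : n^2 = n*n := sq n
      omega
    have hkey : (2:ℝ)^(P + n) < h := by
      have h1 : P + n ≤ N - 1 := by omega
      have h2 : (2:ℝ)^(P+n) ≤ 2^(N-1) := pow_le_pow_right₀ one_le_two h1
      have h3 : (2:ℝ)^(N-1) * 2 = 2^N := by
        rw [← pow_succ]
        congr 1
        omega
      linarith [pow_pos (two_pos (α := ℝ)) (N-1)]
    have hmain := union_measure_lower hn hk1 hk2 a δ hδ hδc hh M hkey
    -- the real-number estimate
    have hNM : N + 1 ≤ 4*(n*(M+1)) := by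
      have h1 : (n-1)*(M+1) = P + (n-1) := by rw [mul_add, mul_one, hP]
      have h2 : (n-1)*(M+1) ≤ n*(M+1) := mul_le_mul_left (by omega) (M+1)
      omega
    have hlogpow : (Real.log h)^(k-1) ≤ ((4*(n:ℝ))*((M:ℝ)+1))^(k-1) := by
      refine pow_le_pow_left₀ hL.le ?_ _
      have h1 : ((N:ℝ)+1) ≤ 4*((n:ℝ)*((M:ℝ)+1)) := by exact_mod_cast hNM
      calc Real.log h ≤ (N:ℝ)+1 := hlog_le
        _ ≤ 4*((n:ℝ)*((M:ℝ)+1)) := h1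
        _ = (4*(n:ℝ))*((M:ℝ)+1) := by ring
    have hhle : h ≤ 2^(2*n) * 2^P := by
      have h1 : N + 1 ≤ 2*n + P := by omega
      have h2 : (2:ℝ)^(N+1) ≤ 2^(2*n) * 2^P := by
        rw [← pow_add]
        exact pow_le_pow_right₀ one_le_two h1
      linarith
    have hf3 : c * 2^(2*n) * (4*(n:ℝ))^(k-1) ≤ 1 := by
      have h1 : (4*(n:ℝ))^(k-1) ≤ (4*(n:ℝ))^n := pow_le_pow_right₀ hn4 (by omega)
      have h2 : c * (2 ^ (n ^ 3 + n ^ 2) * (4 * (n:ℝ)) ^ n * 2 ^ (2 * n)) = 1 :=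
        inv_mul_cancel₀ (ne_of_gt hcden)
      have h3 : (0:ℝ) ≤ c * 2^(2*n) := mul_nonneg hc0.le (pow_nonneg two_pos.le _)
      calc c * 2^(2*n) * (4*(n:ℝ))^(k-1) ≤ c * 2^(2*n) * (4*(n:ℝ))^n :=
            mul_le_mul_of_nonneg_left h1 h3
        _ ≤ (c * 2^(2*n) * (4*(n:ℝ))^n) * 2^(n^3+n^2) := by
            nlinarith [mul_nonneg (mul_nonneg h3 (pow_nonneg (by linarith : (0:ℝ) ≤ 4*(n:ℝ)) n)) (pow_nonneg two_pos.le (n^3+n^2)), pow_pos (two_pos (α := ℝ)) (n^3+n^2),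
              mul_nonneg h3 (pow_nonneg (by linarith : (0:ℝ) ≤ 4*(n:ℝ)) n)]
        _ = c * (2 ^ (n ^ 3 + n ^ 2) * (4 * (n:ℝ)) ^ n * 2 ^ (2 * n)) := by ring
        _ = 1 := h2
    have hreal : c * h * (Real.log h)^(k-1) ≤ ((M:ℝ)+1)^(k-1) * 2^P := by
      have h4 : (0:ℝ) ≤ 2^(2*n) * 2^P := by positivity
      calc c * h * (Real.log h)^(k-1)
          ≤ (c * (2^(2*n) * 2^P)) * (((4*(n:ℝ))*((M:ℝ)+1))^(k-1)) := by
            refine mul_le_mul ?_ hlogpow (pow_nonneg hL.le _) ?_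
            · exact mul_le_mul_of_nonneg_left hhle hc0.le
            · exact mul_nonneg hc0.le h4
        _ = (c * 2^(2*n) * (4*(n:ℝ))^(k-1)) * (((M:ℝ)+1)^(k-1) * 2^P) := by
            rw [mul_pow]
            ring
        _ ≤ 1 * (((M:ℝ)+1)^(k-1) * 2^P) := by
            refine mul_le_mul_of_nonneg_right hf3 ?_
            positivity
        _ = ((M:ℝ)+1)^(k-1) * 2^P := one_mul _
    have hprodnn : (0:ℝ) ≤ ∏ j, δ j := Finset.prod_nonneg (fun j _ => (hδ j).le)
    rw [hIvol]
    calc ENNReal.ofReal (c * h * (Real.log h) ^ (k - 1)) * ENNReal.ofReal (∏ j, δ j)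
        = ENNReal.ofReal ((c * h * (Real.log h) ^ (k - 1)) * ∏ j, δ j) :=
          (ENNReal.ofReal_mul (by positivity)).symm
      _ ≤ ENNReal.ofReal ((((M:ℝ)+1)^(k-1) * 2^P) * ∏ j, δ j) :=
          ENNReal.ofReal_le_ofReal (mul_le_mul_of_nonneg_right hreal hprodnn)
      _ = ENNReal.ofReal (((((M+1)^(k-1) : ℕ)) : ℝ) * (2^P * ∏ j, δ j)) := by
          congr 1
          push_cast
          ring
      _ = ((((M+1)^(k-1) : ℕ)) : ℝ≥0∞) * ENNReal.ofReal (2^P * ∏ j, δ j) := by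
          rw [ENNReal.ofReal_mul (by positivity), ENNReal.ofReal_natCast]
      _ ≤ _ := hmain

end
end

section
/- Let n ≥ 1 and let Φ : (0,∞) → (0,∞) be an increasing function. The class L(𝔾ⁿ) \ [Φ(L)](𝔾ⁿ) is non-empty if and only if Φ is non-regular; that is, there exists an integrable f supported in 𝔾ⁿ with ∫_{{f≠0}} Φ(|f|/h) = ∞ for every h ≥ 1 if and only if limsup_{t→∞} Φ(t)/t = ∞. -/
open MeasureTheory Set Filter Topology Metric ENNReal

noncomputable section

lemma box_eq (n : ℕ) (s : Fin n → Set ℝ) :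
    {x : EucSp n | ∀ j, x j ∈ s j}
      = ((MeasurableEquiv.toLp 2 (Fin n → ℝ)).symm) ⁻¹' (Set.univ.pi s) := by
  ext x
  simp [MeasurableEquiv.toLp, Set.mem_pi]
  exact Iff.rfl

lemma box_meas_s19 (n : ℕ) (s : Fin n → Set ℝ) (hs : ∀ j, MeasurableSet (s j)) :
    MeasurableSet {x : EucSp n | ∀ j, x j ∈ s j} := by
  rw [box_eq]
  exact (MeasurableSet.univ_pi hs).preimage (MeasurableEquiv.measurable _)

lemma box_vol_s19 (n : ℕ) (s : Fin n → Set ℝ) (hs : ∀ j, MeasurableSet (s j)) :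
    volume {x : EucSp n | ∀ j, x j ∈ s j} = ∏ j, volume (s j) := by
  rw [box_eq, (EuclideanSpace.volume_preserving_symm_measurableEquiv_toLp (Fin n)).measure_preimage
    (MeasurableSet.univ_pi hs).nullMeasurableSet, volume_pi_pi]

lemma gcube_vol (n : ℕ) : volume (Gcube n) = 1 := by
  have : Gcube n = {x : EucSp n | ∀ j, x j ∈ Set.Ioo (0:ℝ) 1} := rfl
  rw [this, box_vol_s19 n _ (fun _ => measurableSet_Ioo)]
  simp



lemma construction {n : ℕ} (Φ : ℝ → ℝ) (hΦmono : MonotoneOn Φ (Set.Ioi 0))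
    (A : ℕ → Set (EucSp n)) (hAm : ∀ k, MeasurableSet (A k))
    (hAG : ∀ k, A k ⊆ Gcube n)
    (hAd : Pairwise (Function.onFun Disjoint A))
    (t v μ' : ℕ → ℝ)
    (htpos : ∀ k, 0 < t k) (hvpos : ∀ k, 0 < v k) (hμpos : ∀ k, 0 < μ' k)
    (hAvol : ∀ k, volume (A k) = ENNReal.ofReal (μ' k))
    (hvμ : ∀ k, v k * μ' k ≤ (1/2 : ℝ)^k)
    (hΦμ : ∀ k, 1 ≤ Φ (t k) * μ' k)
    (hv : ∀ k, v k = ((k.unpair.1 : ℝ) + 1) * t k) :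
    ∃ f : EucSp n → ℝ, Integrable f ∧ {x | f x ≠ 0} ⊆ Gcube n ∧
        ∀ h : ℝ, 1 ≤ h → ∫⁻ x in {x | f x ≠ 0}, ENNReal.ofReal (Φ (|f x| / h)) = ⊤ := by
  classical
  set g : EucSp n → ℝ≥0∞ := fun x => ∑' k, (A k).indicator (fun _ => ENNReal.ofReal (v k)) x
    with hgdef
  have hg_on : ∀ k x, x ∈ A k → g x = ENNReal.ofReal (v k) := by
    intro k x hx
    have : ∀ j, j ≠ k → (A j).indicator (fun _ => ENNReal.ofReal (v j)) x = 0 := by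
      intro j hj
      have hxj : x ∉ A j := fun hxj => (hAd hj).le_bot ⟨hxj, hx⟩ -- Disjoint on A j, A k
      simp [Set.indicator_of_notMem hxj]
    rw [hgdef]
    simp only
    rw [tsum_eq_single k this, Set.indicator_of_mem hx]
  have hg_off : ∀ x, (∀ k, x ∉ A k) → g x = 0 := by
    intro x hx
    rw [hgdef]
    simp only
    convert tsum_zero with k
    exact Set.indicator_of_notMem (hx k) _
  have hg_cases : ∀ x, g x = 0 ∨ ∃ k, x ∈ A k ∧ g x = ENNReal.ofReal (v k) := by
    intro x
    by_cases hx : ∃ k, x ∈ A k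
    · obtain ⟨k, hk⟩ := hx
      exact Or.inr ⟨k, hk, hg_on k x hk⟩
    · push_neg at hx
      exact Or.inl (hg_off x hx)
  have hg_ne_top : ∀ x, g x ≠ ⊤ := by
    intro x
    rcases hg_cases x with h | ⟨k, _, h⟩ <;> simp [h]
  have hg_meas : Measurable g :=
    Measurable.ennreal_tsum fun k => measurable_const.indicator (hAm k)
  set f : EucSp n → ℝ := fun x => (g x).toReal with hfdef
  have hf_nonneg : ∀ x, 0 ≤ f x := fun x => ENNReal.toReal_nonneg
  have hf_on : ∀ k x, x ∈ A k → f x = v k := by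
    intro k x hx
    rw [hfdef]; simp only
    rw [hg_on k x hx, ENNReal.toReal_ofReal (hvpos k).le]
  have hf_ofReal : ∀ x, ENNReal.ofReal (|f x|) = g x := by
    intro x
    rw [abs_of_nonneg (hf_nonneg x), hfdef]
    simp only
    exact ENNReal.ofReal_toReal (hg_ne_top x)
  have hf_meas : Measurable f := hg_meas.ennreal_toReal
  have hg_int : ∫⁻ x, g x < ⊤ := by
    rw [hgdef]
    simp only
    rw [lintegral_tsum fun k => (measurable_const.indicator (hAm k)).aemeasurable]
    have hk : ∀ k : ℕ, ∫⁻ x, (A k).indicator (fun _ => ENNReal.ofReal (v k)) x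
        ≤ ENNReal.ofReal ((1/2 : ℝ)^k) := by
      intro k
      rw [lintegral_indicator (hAm k), setLIntegral_const, hAvol k,
        ← ENNReal.ofReal_mul (hvpos k).le]
      exact ENNReal.ofReal_le_ofReal (hvμ k)
    calc ∑' k, ∫⁻ x, (A k).indicator (fun _ => ENNReal.ofReal (v k)) x
        ≤ ∑' k : ℕ, ENNReal.ofReal ((1/2 : ℝ)^k) := ENNReal.tsum_le_tsum hk
      _ = ∑' k : ℕ, (ENNReal.ofReal (1/2 : ℝ))^k := by
          congr 1; funext k; rw [ENNReal.ofReal_pow (by norm_num)]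
      _ = (1 - ENNReal.ofReal (1/2 : ℝ))⁻¹ := ENNReal.tsum_geometric _
      _ < ⊤ := by
          rw [lt_top_iff_ne_top, Ne, ENNReal.inv_eq_top, tsub_eq_zero_iff_le]
          intro h
          exact absurd (lt_of_lt_of_le (ENNReal.ofReal_lt_one.2 (by norm_num)) h) (lt_irrefl _)
  have hsupp : {x | f x ≠ 0} ⊆ ⋃ k, A k := by
    intro x hx
    by_contra hxU
    simp only [Set.mem_iUnion, not_exists] at hxU
    apply hx
    rw [hfdef]; simp only
    rw [hg_off x hxU]; simp
  refine ⟨f, ⟨hf_meas.aestronglyMeasurable, ?_⟩, hsupp.trans ?_, ?_⟩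
  · rw [hasFiniteIntegral_iff_ofReal (ae_of_all _ hf_nonneg)]
    have : ∀ x, ENNReal.ofReal (f x) = g x := by
      intro x
      rw [← abs_of_nonneg (hf_nonneg x), hf_ofReal]
    simpa [this] using hg_int
  · exact Set.iUnion_subset fun k => hAG k
  · intro h hh
    obtain ⟨m, hm⟩ := exists_nat_ge h
    have hm1 : h ≤ (m : ℝ) + 1 := hm.trans (by linarith)
    have hsub : (⋃ j : ℕ, A (Nat.pair m j)) ⊆ {x | f x ≠ 0} := by
      intro x hx
      obtain ⟨j, hj⟩ := Set.mem_iUnion.1 hx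
      rw [Set.mem_setOf_eq, hf_on _ x hj]
      exact (hvpos _).ne'
    have key : ∀ j : ℕ, (1 : ℝ≥0∞) ≤
        ∫⁻ x in A (Nat.pair m j), ENNReal.ofReal (Φ (|f x| / h)) := by
      intro j
      set k := Nat.pair m j with hk
      have hf_eq : ∫⁻ x in A k, ENNReal.ofReal (Φ (|f x| / h))
          = ENNReal.ofReal (Φ (v k / h)) * volume (A k) := by
        rw [setLIntegral_congr_fun (hAm k) (fun x hx => by
          rw [hf_on k x hx, abs_of_nonneg (hvpos k).le]), setLIntegral_const]
      rw [hf_eq, hAvol k]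
      have hΦt_pos : 0 < Φ (t k) := by nlinarith [hΦμ k, hμpos k]
      have hΦle : Φ (t k) ≤ Φ (v k / h) := by
        apply hΦmono (Set.mem_Ioi.2 (htpos k))
          (Set.mem_Ioi.2 (div_pos (hvpos k) (by linarith)))
        rw [le_div_iff₀ (by linarith : (0:ℝ) < h)]
        have : (k.unpair.1 : ℝ) = (m : ℝ) := by rw [hk, Nat.unpair_pair]
        calc t k * h ≤ t k * ((m : ℝ) + 1) := by
              apply mul_le_mul_of_nonneg_left hm1 (htpos k).le
          _ = v k := by rw [hv k, this]; ring
      calc (1 : ℝ≥0∞) = ENNReal.ofReal 1 := by simp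
        _ ≤ ENNReal.ofReal (Φ (t k) * μ' k) := ENNReal.ofReal_le_ofReal (hΦμ k)
        _ = ENNReal.ofReal (Φ (t k)) * ENNReal.ofReal (μ' k) :=
            ENNReal.ofReal_mul hΦt_pos.le
        _ ≤ ENNReal.ofReal (Φ (v k / h)) * ENNReal.ofReal (μ' k) := by
            exact mul_le_mul_left (ENNReal.ofReal_le_ofReal hΦle) _
    have hdisj : Pairwise (Function.onFun Disjoint fun j : ℕ => A (Nat.pair m j)) := by
      intro j₁ j₂ hne
      exact hAd (fun hpp => hne (Nat.pair_eq_pair.1 hpp).2)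
    refine top_unique ?_
    calc (⊤ : ℝ≥0∞) = ∑' _ : ℕ, (1 : ℝ≥0∞) :=
          (tsum_const_eq_top_of_ne_zero one_ne_zero).symm
      _ ≤ ∑' j : ℕ, ∫⁻ x in A (Nat.pair m j), ENNReal.ofReal (Φ (|f x| / h)) :=
          ENNReal.tsum_le_tsum key
      _ = ∫⁻ x in ⋃ j : ℕ, A (Nat.pair m j), ENNReal.ofReal (Φ (|f x| / h)) :=
          (lintegral_iUnion (fun j => hAm _) hdisj _).symm
      _ ≤ ∫⁻ x in {x | f x ≠ 0}, ENNReal.ofReal (Φ (|f x| / h)) :=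
          lintegral_mono_set hsub

lemma regular_contra {n : ℕ} (Φ : ℝ → ℝ) (hΦmono : MonotoneOn Φ (Set.Ioi 0))
    (f : EucSp n → ℝ) (hfInt : Integrable f) (hfsupp : {x | f x ≠ 0} ⊆ Gcube n)
    (hfall : ∀ h : ℝ, 1 ≤ h → ∫⁻ x in {x | f x ≠ 0}, ENNReal.ofReal (Φ (|f x| / h)) = ⊤)
    (hnr : ¬ (∀ M T : ℝ, ∃ t : ℝ, T < t ∧ 0 < t ∧ M * t < Φ t)) : False := by
  push_neg at hnr
  obtain ⟨M, T, hreg⟩ := hnr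
  set T' : ℝ := max T 1 with hT'
  set M' : ℝ := max M 0 with hM'
  have hT'pos : (0:ℝ) < T' := lt_of_lt_of_le one_pos (le_max_right _ _)
  have hM'nonneg : (0:ℝ) ≤ M' := le_max_right _ _
  set s : Set (EucSp n) := {x | f x ≠ 0} with hs
  have hsnm : NullMeasurableSet s volume := by
    have : s = f ⁻¹' ({0}ᶜ) := rfl
    rw [this]
    exact hfInt.aemeasurable.nullMeasurable (measurableSet_singleton 0).compl
  have hbound : ∀ x ∈ s, ENNReal.ofReal (Φ (|f x| / 1))
      ≤ ENNReal.ofReal (Φ T') + ENNReal.ofReal (M' * |f x|) := by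
    intro x hx
    rw [div_one]
    have hfx : 0 < |f x| := abs_pos.2 hx
    rcases le_or_gt (|f x|) T' with hle | hlt
    · refine le_trans ?_ (le_add_right (le_refl _))
      exact ENNReal.ofReal_le_ofReal (hΦmono (Set.mem_Ioi.2 hfx) (Set.mem_Ioi.2 hT'pos) hle)
    · refine le_trans ?_ (le_add_left (le_refl _))
      apply ENNReal.ofReal_le_ofReal
      have h1 : Φ (|f x|) ≤ M * |f x| :=
        hreg (|f x|) (lt_of_le_of_lt (le_max_left T 1) hlt) hfx
      have h2 : M * |f x| ≤ M' * |f x| :=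
        mul_le_mul_of_nonneg_right (le_max_left _ _) hfx.le
      linarith
  have hae : ∀ᵐ x ∂(volume.restrict s), ENNReal.ofReal (Φ (|f x| / 1))
      ≤ ENNReal.ofReal (Φ T') + ENNReal.ofReal (M' * |f x|) :=
    (ae_restrict_iff'₀ hsnm).2 (ae_of_all _ hbound)
  have hvol_s : volume s ≤ 1 := by
    calc volume s ≤ volume (Gcube n) := measure_mono hfsupp
      _ = 1 := gcube_vol n
  have hfin : ∫⁻ x in s, ENNReal.ofReal (Φ (|f x| / 1)) < ⊤ := by
    calc ∫⁻ x in s, ENNReal.ofReal (Φ (|f x| / 1))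
        ≤ ∫⁻ x in s, (ENNReal.ofReal (Φ T') + ENNReal.ofReal (M' * |f x|)) :=
          lintegral_mono_ae hae
      _ = ENNReal.ofReal (Φ T') * volume s
          + ∫⁻ x in s, ENNReal.ofReal (M' * |f x|) := by
          rw [lintegral_add_left measurable_const, setLIntegral_const]
      _ ≤ ENNReal.ofReal (Φ T') * 1 + ∫⁻ x, ENNReal.ofReal (M' * |f x|) := by
          gcongr
          exacts [Measure.restrict_le_self]
      _ = ENNReal.ofReal (Φ T') + ENNReal.ofReal M' * ∫⁻ x, ENNReal.ofReal (|f x|) := by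
          rw [mul_one]
          congr 1
          rw [← lintegral_const_mul' _ _ ENNReal.ofReal_ne_top]
          congr 1; funext x
          rw [ENNReal.ofReal_mul hM'nonneg]
      _ < ⊤ := by
          apply ENNReal.add_lt_top.2
          constructor
          · exact ENNReal.ofReal_lt_top
          · apply ENNReal.mul_lt_top ENNReal.ofReal_lt_top
            have := hfInt.2
            rw [hasFiniteIntegral_iff_norm] at this
            have heq : ∀ x : EucSp n, ENNReal.ofReal (|f x|) = ENNReal.ofReal ‖f x‖ := by
              intro x; rw [Real.norm_eq_abs]
            simpa [heq] using this
  exact absurd (hfall 1 le_rfl) hfin.ne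

lemma nonregular_construct {n : ℕ} (hn : 1 ≤ n) (Φ : ℝ → ℝ) (hΦmono : MonotoneOn Φ (Set.Ioi 0))
    (hΦpos : ∀ t : ℝ, 0 < t → 0 < Φ t)
    (hNR : ∀ M T : ℝ, ∃ t : ℝ, T < t ∧ 0 < t ∧ M * t < Φ t) :
    (∃ f : EucSp n → ℝ, Integrable f ∧ {x | f x ≠ 0} ⊆ Gcube n ∧
        ∀ h : ℝ, 1 ≤ h → ∫⁻ x in {x | f x ≠ 0}, ENNReal.ofReal (Φ (|f x| / h)) = ⊤) := by
  classical
  have j₀ : Fin n := ⟨0, hn⟩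
  have hex : ∀ k : ℕ, ∃ t : ℝ, 1 < t ∧ 0 < t ∧
      ((k.unpair.1 : ℝ) + 1) * 2 ^ (k + 3) * t < Φ t := fun k =>
    hNR (((k.unpair.1 : ℝ) + 1) * 2 ^ (k + 3)) 1
  choose t ht1 htpos htΦ using hex
  set v : ℕ → ℝ := fun k => ((k.unpair.1 : ℝ) + 1) * t k with hvdef
  set μ' : ℕ → ℝ := fun k => min ((1/2 : ℝ)^(k+3)) ((1/2 : ℝ)^k / v k) with hμdef
  have hm1 : ∀ k : ℕ, (1:ℝ) ≤ (k.unpair.1 : ℝ) + 1 := fun k => by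
    have := Nat.cast_nonneg (α := ℝ) k.unpair.1; linarith
  have hvpos : ∀ k, 0 < v k := fun k => mul_pos (by positivity) (htpos k)
  have hμpos : ∀ k, 0 < μ' k :=
    fun k => lt_min (by positivity) (div_pos (by positivity) (hvpos k))
  have h2pow : ∀ k : ℕ, (1/2 : ℝ)^k * 2^k = 1 := by
    intro k; rw [← mul_pow]; norm_num
  have hvμ : ∀ k, v k * μ' k ≤ (1/2 : ℝ)^k := by
    intro k
    calc v k * μ' k ≤ v k * ((1/2 : ℝ)^k / v k) :=
          mul_le_mul_of_nonneg_left (min_le_right _ _) (hvpos k).le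
      _ = (1/2 : ℝ)^k := mul_div_cancel₀ _ (hvpos k).ne'
  have hΦμ : ∀ k, 1 ≤ Φ (t k) * μ' k := by
    intro k
    have hM : ((k.unpair.1 : ℝ) + 1) * 2 ^ (k + 3) * t k < Φ (t k) := htΦ k
    have hat : (1:ℝ) ≤ ((k.unpair.1 : ℝ) + 1) * t k :=
      one_le_mul_of_one_le_of_one_le (hm1 k) (ht1 k).le
    have hb : (0:ℝ) < (2:ℝ)^(k+3) := by positivity
    rcases min_cases ((1/2 : ℝ)^(k+3)) ((1/2 : ℝ)^k / v k) with ⟨hmin, _⟩ | ⟨hmin, _⟩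
    · have h1 : (2:ℝ)^(k+3) ≤ Φ (t k) := by
        nlinarith [mul_le_mul_of_nonneg_left hat hb.le]
      have hp : (0:ℝ) < (1/2:ℝ)^(k+3) := by positivity
      have hmul := mul_le_mul_of_nonneg_right h1 hp.le
      rw [hμdef]; simp only [hmin]
      nlinarith [h2pow (k+3)]
    · have h8 : (2:ℝ)^k ≤ 2^(k+3) := pow_le_pow_right₀ (by norm_num) (by omega)
      have h2k : (0:ℝ) < (2:ℝ)^k := by positivity
      have h1 : (2:ℝ)^k * v k ≤ Φ (t k) := by
        rw [hvdef]; simp only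
        nlinarith [htpos k, hm1 k]
      have hp : (0:ℝ) < (1/2:ℝ)^k := by positivity
      rw [hμdef]; simp only [hmin]
      rw [← mul_div_assoc, le_div_iff₀ (hvpos k)]
      have hmul := mul_le_mul_of_nonneg_right h1 hp.le
      have heq : (2:ℝ)^k * v k * (1/2:ℝ)^k = v k := by
        rw [mul_comm ((2:ℝ)^k) (v k), mul_assoc, mul_comm ((2:ℝ)^k) _, h2pow k, mul_one]
      linarith
  -- intervals
  set d : ℕ → ℝ := fun k => (1 - (1/2 : ℝ)^k) / 2 with hddef
  have hdmono : Monotone d := by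
    apply monotone_nat_of_le_succ
    intro k
    rw [hddef]; simp only
    have h := pow_le_pow_of_le_one (by norm_num : (0:ℝ) ≤ 1/2) (by norm_num)
      (by omega : k ≤ k + 1)
    linarith
  have hdstep : ∀ k, d k + μ' k ≤ d (k+1) := by
    intro k
    have h1 : μ' k ≤ (1/2:ℝ)^(k+3) := min_le_left _ _
    have h2 : d (k+1) - d k = (1/2:ℝ)^(k+2) := by
      rw [hddef]; simp only [pow_succ]; ring
    have h3 : (1/2:ℝ)^(k+3) ≤ (1/2:ℝ)^(k+2) :=
      pow_le_pow_of_le_one (by norm_num) (by norm_num) (by omega)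
    linarith
  have hd0 : ∀ k, 0 ≤ d k := by
    intro k
    rw [hddef]; simp only
    have : (1/2:ℝ)^k ≤ 1 := pow_le_one₀ (by norm_num) (by norm_num)
    linarith
  have hdlt : ∀ k, d k + μ' k < 1 := by
    intro k
    have h1 : μ' k ≤ (1/2:ℝ)^(k+3) := min_le_left _ _
    have h2 : (1/2:ℝ)^(k+3) ≤ (1/2:ℝ)^3 :=
      pow_le_pow_of_le_one (by norm_num) (by norm_num) (by omega)
    have h3 : d k < 1/2 := by
      rw [hddef]; simp only
      have : (0:ℝ) < (1/2:ℝ)^k := by positivity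
      linarith
    norm_num at h2
    linarith
  set I : ℕ → Set ℝ := fun k => Set.Ioo (d k) (d k + μ' k) with hIdef
  have hI_sub : ∀ k, I k ⊆ Set.Ioo (0:ℝ) 1 := by
    intro k x hx
    obtain ⟨hx1, hx2⟩ := hx
    exact ⟨lt_of_le_of_lt (hd0 k) hx1, lt_trans hx2 (hdlt k)⟩
  have hI_disj : ∀ k l, k ≠ l → Disjoint (I k) (I l) := by
    have key : ∀ k l, k < l → Disjoint (I k) (I l) := by
      intro k l hkl
      rw [Set.disjoint_left]
      rintro x ⟨_, hx2⟩ ⟨hx3, _⟩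
      have : d k + μ' k ≤ d l := (hdstep k).trans (hdmono (by omega : k + 1 ≤ l))
      linarith
    intro k l hkl
    rcases lt_or_gt_of_ne hkl with h | h
    · exact key k l h
    · exact (key l k h).symm
  set sF : ℕ → Fin n → Set ℝ := fun k j => if j = j₀ then I k else Set.Ioo 0 1 with hsFdef
  set A : ℕ → Set (EucSp n) := fun k => {x | ∀ j, x j ∈ sF k j} with hAdef
  have hsFm : ∀ k j, MeasurableSet (sF k j) := by
    intro k j
    rw [hsFdef]; simp only
    split <;> exact measurableSet_Ioo
  have hAm : ∀ k, MeasurableSet (A k) := fun k => box_meas_s19 n (sF k) (hsFm k)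
  have hsF_sub : ∀ k j, sF k j ⊆ Set.Ioo (0:ℝ) 1 := by
    intro k j
    rw [hsFdef]; simp only
    split
    · exact hI_sub k
    · exact subset_rfl
  have hAG : ∀ k, A k ⊆ Gcube n := by
    intro k x hx j
    exact hsF_sub k j (hx j)
  have hAd : Pairwise (Function.onFun Disjoint A) := by
    intro k l hkl
    rw [Function.onFun, Set.disjoint_left]
    intro x hxk hxl
    have h1 : x j₀ ∈ I k := by simpa [hsFdef] using hxk j₀
    have h2 : x j₀ ∈ I l := by simpa [hsFdef] using hxl j₀
    exact (hI_disj k l hkl).le_bot ⟨h1, h2⟩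
  have hAvol : ∀ k, volume (A k) = ENNReal.ofReal (μ' k) := by
    intro k
    rw [hAdef]; simp only
    rw [box_vol_s19 n (sF k) (hsFm k)]
    have : ∀ j, volume (sF k j) = if j = j₀ then ENNReal.ofReal (μ' k) else 1 := by
      intro j
      rw [hsFdef]; simp only
      split
      · rw [hIdef]; simp only [Real.volume_Ioo]; congr 1; ring
      · simp [Real.volume_Ioo]
    simp only [this]
    rw [Finset.prod_ite_eq' Finset.univ j₀ (fun _ => ENNReal.ofReal (μ' k))]
    simp
  exact construction Φ hΦmono A hAm hAG hAd t v μ' htpos hvpos hμpos hAvol hvμ hΦμ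
    (fun k => rfl)

theorem stmt19 (n : ℕ) (hn : 1 ≤ n)
    (Φ : ℝ → ℝ) (hΦmono : MonotoneOn Φ (Set.Ioi 0)) (hΦpos : ∀ t : ℝ, 0 < t → 0 < Φ t) :
    (∃ f : EucSp n → ℝ, Integrable f ∧ {x | f x ≠ 0} ⊆ Gcube n ∧
        ∀ h : ℝ, 1 ≤ h → ∫⁻ x in {x | f x ≠ 0}, ENNReal.ofReal (Φ (|f x| / h)) = ⊤) ↔
      NonRegular Φ := by
  constructor
  · rintro ⟨f, hfInt, hfsupp, hfall⟩
    by_contra hnr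
    exact regular_contra Φ hΦmono f hfInt hfsupp hfall hnr
  · intro hNR
    exact nonregular_construct hn Φ hΦmono hΦpos hNR

end
end
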